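/- Let S be a monoid. The following are equivalent: (a) for every t ∈ S, the set R(t,t) is either empty or finitely generated as a right S-subact of S × S; (b) for every t ∈ S there exist finitely many pairs (u_1,v_1), …, (u_q,v_q) ∈ R(t,t) (possibly q = 0) such that for every left S-act B satisfying Condition (PWP) and all a, b ∈ B with t•a = t•b, there exist i ∈ {1,…,q} and d ∈ B with a = u_i•d and b = v_i•d. -/

import Mathlib

universe u

/-- Condition (PWP) for a left `S`-act `A`. -/
def CondPWP (S : Type*) [Monoid S] (A : Type*) [MulAction S A] : Prop :=
  ∀ (t : S) (a b : A), t • a = t • b →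
    ∃ (c : A) (u v : S), a = u • c ∧ b = v • c ∧ t * u = t * v

/-- `R(s,t) = {(u,v) | s*u = t*v}`. -/
def Rset (S : Type*) [Monoid S] (s t : S) : Set (S × S) :=
  {p | s * p.1 = t * p.2}

/-- A subset of `S × S` is finitely generated as a right `S`-subact. -/
def FGpair (S : Type*) [Monoid S] (R : Set (S × S)) : Prop :=
  ∃ F : Finset (S × S), ↑F ⊆ R ∧
    ∀ p ∈ R, ∃ q ∈ F, ∃ w : S, p = (q.1 * w, q.2 * w)

theorem condPWP_R_fg_iff_replacement (S : Type u) [Monoid S] :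
    (∀ t : S, Rset S t t = ∅ ∨ FGpair S (Rset S t t)) ↔
      ∀ t : S, ∃ F : Finset (S × S), ↑F ⊆ Rset S t t ∧
        ∀ (B : Type u) [MulAction S B], CondPWP S B → ∀ a b : B, t • a = t • b →
          ∃ p ∈ F, ∃ d : B, a = p.1 • d ∧ b = p.2 • d := by
  constructor
  · intro h t
    rcases h t with h1 | ⟨F, hF, hgen⟩
    · exfalso
      have hone : ((1 : S), (1 : S)) ∈ Rset S t t := rfl
      rw [h1] at hone
      exact hone
    · refine ⟨F, hF, ?_⟩
      intro B _ hB a b hab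
      obtain ⟨c, u, v, ha, hb, huv⟩ := hB t a b hab
      obtain ⟨q, hqF, w, hw⟩ := hgen (u, v) huv
      obtain ⟨hu, hv⟩ := Prod.mk.injEq .. ▸ hw
      exact ⟨q, hqF, w • c, by rw [ha, hu, mul_smul], by rw [hb, hv, mul_smul]⟩
  · intro h t
    obtain ⟨F, hF, hrep⟩ := h t
    right
    refine ⟨F, hF, ?_⟩
    intro p hp
    have hS : CondPWP S S := fun t a b hab =>
      ⟨1, a, b, by simp, by simp, by simpa [smul_eq_mul] using hab⟩
    obtain ⟨q, hqF, d, hd1, hd2⟩ := hrep S hS p.1 p.2 (by rw [smul_eq_mul, smul_eq_mul]; exact hp)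
    simp only [smul_eq_mul] at hd1 hd2
    exact ⟨q, hqF, d, Prod.ext hd1 hd2⟩
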